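/- For every w = (k_1, k_2, …) ∈ Σ_{≥0} and every m, n ∈ ℕ ∪ {0}, the 0-odometer O_0 and the shift σ on Σ_{≥0} satisfy the pointwise renormalization identity (O_0^m ∘ σ^n)(w) = (σ^n ∘ O_0^{m · 2^n · 2^{k_1 + k_2 + ⋯ + k_n}})(w). -/
import Mathlib


/-- The `0`-odometer on the Baire-type space `ℕ₀^ℕ`:
`O₀(w₁,w₂,w₃,…) = (0,…,0 (w₁ times), w₂+1, w₃, …)`. -/
def baireOdometer (w : ℕ → ℕ) : ℕ → ℕ := fun i =>
  if i < w 0 then 0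
  else if i = w 0 then w 1 + 1
  else w (i - w 0 + 1)

/-- The shift map `σ` on `ℕ₀^ℕ`. -/
def baireShift (w : ℕ → ℕ) : ℕ → ℕ := fun i => w (i + 1)

/-- `N`-form: `O₀^{2^{w₀}} w = (w₀ + w₁ + 1, w₂, w₃, …)`. -/
def wNform (w : ℕ → ℕ) : ℕ → ℕ := fun i =>
  if i = 0 then w 0 + w 1 + 1 else w (i + 1)

/-- `U`-form: for `j < w₀`, `O₀^{2^j} w = (j, 0^{w₀-j-1}, w₁+1, w₂, …)`. -/
def wUform (j : ℕ) (w : ℕ → ℕ) : ℕ → ℕ := fun i =>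
  if i = 0 then j
  else if i < w 0 - j then 0
  else if i = w 0 - j then w 1 + 1
  else w (i - (w 0 - j) + 1)

lemma odo_pow : ∀ (j : ℕ) (w : ℕ → ℕ), j ≤ w 0 →
    (baireOdometer)^[2 ^ j] w = if j = w 0 then wNform w else wUform j w := by
  intro j
  induction j with
  | zero =>
    intro w h
    simp only [pow_zero, Function.iterate_one]
    by_cases hw : 0 = w 0
    · rw [if_pos hw]
      funext i
      simp only [baireOdometer, wNform, zero_add]
      split_ifs <;> first | rfl | omega | (congr 1 <;> omega) | (exfalso; omega) | exact False.elim ‹False›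
    · rw [if_neg hw]
      funext i
      simp only [baireOdometer, wUform, zero_add]
      split_ifs <;> first | rfl | omega | (congr 1 <;> omega) | (exfalso; omega) | exact False.elim ‹False›
  | succ j ih =>
    intro w h
    have hj : j ≤ w 0 := by omega
    have hne : j ≠ w 0 := by omega
    have h1 : (baireOdometer)^[2 ^ j] w = wUform j w := by
      rw [ih w hj, if_neg hne]
    have hv0 : wUform j w 0 = j := by simp [wUform]
    rw [pow_succ, mul_two, Function.iterate_add_apply, h1,
      ih (wUform j w) (by rw [hv0]), if_pos hv0.symm]
    clear h1 hv0
    by_cases hc : j + 1 = w 0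
    · rw [if_pos hc]
      funext i
      simp only [wNform, wUform, zero_add]
      split_ifs <;> first | rfl | omega | (congr 1 <;> omega) | (exfalso; omega) | exact False.elim ‹False›
    · rw [if_neg hc]
      funext i
      simp only [wNform, wUform, zero_add]
      split_ifs <;> first | rfl | omega | (congr 1 <;> omega) | (exfalso; omega) | exact False.elim ‹False›

lemma odo_key (w : ℕ → ℕ) :
    (baireOdometer)^[2 ^ (w 0 + 1)] w =
      fun i => if i = 0 then w 0 else baireOdometer (baireShift w) (i - 1) := by
  have h1 : (baireOdometer)^[2 ^ (w 0)] w = wNform w := by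
    rw [odo_pow (w 0) w le_rfl, if_pos rfl]
  have hv : w 0 ≤ wNform w 0 := by simp [wNform]; omega
  have hne : w 0 ≠ wNform w 0 := by simp [wNform]; omega
  rw [pow_succ, mul_two, Function.iterate_add_apply, h1,
    odo_pow (w 0) (wNform w) hv, if_neg hne]
  clear h1 hv hne
  funext i
  simp only [wUform, wNform, baireOdometer, baireShift, zero_add]
  split_ifs <;> first | rfl | omega | (congr 1 <;> omega) | (exfalso; omega) | exact False.elim ‹False›

lemma shift_odo : ∀ (m : ℕ) (w : ℕ → ℕ),
    (baireOdometer)^[m] (baireShift w) =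
      baireShift ((baireOdometer)^[m * 2 ^ (w 0 + 1)] w) := by
  intro m
  induction m with
  | zero => intro w; simp
  | succ m ih =>
    intro w
    have hkey := odo_key w
    have hv0 : ((baireOdometer)^[2 ^ (w 0 + 1)] w) 0 = w 0 := by rw [hkey]; simp
    have hσ : baireShift ((baireOdometer)^[2 ^ (w 0 + 1)] w)
        = baireOdometer (baireShift w) := by
      funext i
      show ((baireOdometer)^[2 ^ (w 0 + 1)] w) (i + 1) = _
      rw [hkey]
      simp
    calc (baireOdometer)^[m + 1] (baireShift w)
        = (baireOdometer)^[m] (baireOdometer (baireShift w)) := by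
          rw [Function.iterate_succ_apply]
      _ = (baireOdometer)^[m] (baireShift ((baireOdometer)^[2 ^ (w 0 + 1)] w)) := by
          rw [hσ]
      _ = baireShift ((baireOdometer)^[m * 2 ^ (((baireOdometer)^[2 ^ (w 0 + 1)] w) 0 + 1)]
            ((baireOdometer)^[2 ^ (w 0 + 1)] w)) := ih _
      _ = baireShift ((baireOdometer)^[m * 2 ^ (w 0 + 1) + 2 ^ (w 0 + 1)] w) := by
          rw [hv0, Function.iterate_add_apply]
      _ = baireShift ((baireOdometer)^[(m + 1) * 2 ^ (w 0 + 1)] w) := by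
          ring_nf

/-- Pointwise renormalization identity between the `0`-odometer and the shift:
for `w = (k₁, k₂, …)`, `(O₀^m ∘ σ^n)(w) = (σ^n ∘ O₀^{m·2^n·2^{k₁+⋯+kₙ}})(w)`. -/
theorem baireOdometer_shift_renormalization (w : ℕ → ℕ) (m n : ℕ) :
    (baireOdometer)^[m] ((baireShift)^[n] w) =
      (baireShift)^[n]
        ((baireOdometer)^[m * 2 ^ n * 2 ^ (∑ i ∈ Finset.range n, w i)] w) := by
  induction n generalizing w with
  | zero => simp
  | succ n ih =>
    rw [Function.iterate_succ_apply, ih (baireShift w), shift_odo,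
      ← Function.iterate_succ_apply]
    congr 2
    have hsum : ∑ i ∈ Finset.range n, baireShift w i = ∑ i ∈ Finset.range n, w (i + 1) := by
      simp [baireShift]
    have hs : ∑ i ∈ Finset.range (n + 1), w i = (∑ i ∈ Finset.range n, w (i + 1)) + w 0 :=
      Finset.sum_range_succ' w n
    rw [hsum, hs, pow_add, pow_add, pow_succ]
    ring
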